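/- Let f : Δ_n → ℝ be permutation-invariant and define F : Dens(n) → ℝ by F(ρ) = f(λ(ρ)). Then F is convex on Dens(n) if and only if f is convex on Δ_n, and F is strictly convex on Dens(n) if and only if f is strictly convex on Δ_n. -/

import Mathlib

open Matrix BigOperators ComplexOrder

noncomputable section

/-- The space of `n × n` complex matrices. -/
abbrev Mat (n : ℕ) := Matrix (Fin n) (Fin n) ℂ

/-- The set of density matrices on ℂⁿ: positive semidefinite with trace 1. -/
def Dens (n : ℕ) : Set (Mat n) := {ρ | ρ.PosSemidef ∧ ρ.trace = 1}

/-- Real inner product on (Hermitian) matrices: ⟨A,B⟩ = Tr(AB) (real part). -/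
def hip {n : ℕ} (A B : Mat n) : ℝ := ((A * B).trace).re

/-- A POVM with finite outcome set `Y`. -/
def IsPOVM {n : ℕ} {Y : Type*} [Fintype Y] (μ : Y → Mat n) : Prop :=
  (∀ y, (μ y).PosSemidef) ∧ ∑ y, μ y = 1

/-- A projection-valued measurement. -/
def IsPVM {n : ℕ} {Y : Type*} [Fintype Y] (μ : Y → Mat n) : Prop :=
  IsPOVM μ ∧ (∀ y, (μ y).IsHermitian ∧ μ y * μ y = μ y) ∧
    ∀ y y', y ≠ y' → μ y * μ y' = 0

/-- Expected score of a quantum score with report type `R`. -/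
def expScoreR {n : ℕ} {R : Type*} {Y : Type*} [Fintype Y]
    (s : R → Y → ℝ) (μ : R → Y → Mat n) (r : R) (ρ : Mat n) : ℝ :=
  ∑ y, hip (μ r y) ρ * s r y

/-- Truthfulness of a quantum score. -/
def Truthful {n : ℕ} {Y : Type*} [Fintype Y]
    (s : Mat n → Y → ℝ) (μ : Mat n → Y → Mat n) : Prop :=
  ∀ ρ ∈ Dens n, ∀ ρ' ∈ Dens n, expScoreR s μ ρ' ρ ≤ expScoreR s μ ρ ρ

/-- Strict truthfulness of a quantum score. -/
def StrictlyTruthful {n : ℕ} {Y : Type*} [Fintype Y]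
    (s : Mat n → Y → ℝ) (μ : Mat n → Y → Mat n) : Prop :=
  Truthful s μ ∧ ∀ ρ ∈ Dens n, ∀ ρ' ∈ Dens n,
    expScoreR s μ ρ' ρ = expScoreR s μ ρ ρ → ρ' = ρ

/-- `d` is a (Hermitian-matrix) subgradient of `F` at `ρ` relative to `Dens n`. -/
def IsQSubgrad {n : ℕ} (F : Mat n → ℝ) (ρ d : Mat n) : Prop :=
  ∀ τ ∈ Dens n, F ρ + hip d (τ - ρ) ≤ F τ

/-- `d` is a subgradient of `f` at `p` relative to `P ⊆ ℝ^Y`. -/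
def IsCSubgrad {Y : Type*} [Fintype Y] (P : Set (Y → ℝ)) (f : (Y → ℝ) → ℝ)
    (p d : Y → ℝ) : Prop :=
  ∀ q ∈ P, f p + ∑ y, d y * (q y - p y) ≤ f q

/-- A POVM is tomographically complete if the real span of its elements is
the set of Hermitian matrices. -/
def TomoComplete {n : ℕ} {Y : Type*} [Fintype Y] (μ : Y → Mat n) : Prop :=
  ∀ X : Mat n, X.IsHermitian ↔ X ∈ Submodule.span ℝ (Set.range μ)

/-- The eigenvalues of a Hermitian matrix, in non-increasing order
(junk value `0` on non-Hermitian matrices). -/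
def eigs {n : ℕ} (ρ : Mat n) : Fin n → ℝ :=
  if h : ρ.IsHermitian then
    fun i => (h.eigenvalues ∘ (Tuple.sort h.eigenvalues)) i.rev
  else 0

/-- The outer product `v v*`. -/
def outer {n : ℕ} (v : Fin n → ℂ) : Mat n := Matrix.vecMulVec v (star v)

/-- A family of orthonormal vectors in ℂⁿ. -/
def ONFam {n k : ℕ} (x : Fin k → Fin n → ℂ) : Prop :=
  ∀ i j, ∑ m, (starRingEnd ℂ) (x i m) * x j m = if i = j then 1 else 0

/-- `x` is a spectral decomposition of `ρ` (with eigenvalues in non-increasing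
order `eigs ρ`). -/
def IsSpecDecomp {n : ℕ} (ρ : Mat n) (x : Fin n → Fin n → ℂ) : Prop :=
  ONFam x ∧ ρ = ∑ y, (eigs ρ y : ℂ) • outer (x y)

/-- Expected classical score `ŝ(q; p)`. -/
def cExp {n : ℕ} (s : (Fin n → ℝ) → Fin n → ℝ) (q p : Fin n → ℝ) : ℝ :=
  ∑ y, p y * s q y

/-- Properness of a classical scoring rule. -/
def Proper {n : ℕ} (s : (Fin n → ℝ) → Fin n → ℝ) : Prop :=
  ∀ p ∈ stdSimplex ℝ (Fin n), ∀ q ∈ stdSimplex ℝ (Fin n), cExp s q p ≤ cExp s p p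

/-- Strict properness of a classical scoring rule. -/
def StrictlyProper {n : ℕ} (s : (Fin n → ℝ) → Fin n → ℝ) : Prop :=
  Proper s ∧ ∀ p ∈ stdSimplex ℝ (Fin n), ∀ q ∈ stdSimplex ℝ (Fin n),
    cExp s q p = cExp s p p → q = p

/-- Permutation invariance of a classical scoring rule: `ŝ(p, y) = ŝ(πp, π y)`
where `(πp)_y = p_{π y}`. -/
def PermInv {n : ℕ} (s : (Fin n → ℝ) → Fin n → ℝ) : Prop :=
  ∀ (π : Equiv.Perm (Fin n)) (p : Fin n → ℝ) (y : Fin n), s p y = s (p ∘ π) (π y)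

/-- Expected spectral score `S[ŝ](ρ'; ρ)` computed using the spectral
decomposition `x` of the report `ρ'`. -/
def specExp {n : ℕ} (s : (Fin n → ℝ) → Fin n → ℝ) (x : Fin n → Fin n → ℂ)
    (ρ' ρ : Mat n) : ℝ :=
  ∑ y, hip (outer (x y)) ρ * s (eigs ρ') y

/-- Truthfulness of the spectral score `S[ŝ]`. -/
def SpecTruthful {n : ℕ} (s : (Fin n → ℝ) → Fin n → ℝ) : Prop :=
  ∀ ρ ∈ Dens n, ∀ ρ' ∈ Dens n, ∀ x z, IsSpecDecomp ρ' x → IsSpecDecomp ρ z →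
    specExp s x ρ' ρ ≤ specExp s z ρ ρ

/-- Strict truthfulness of the spectral score `S[ŝ]`. -/
def SpecStrictlyTruthful {n : ℕ} (s : (Fin n → ℝ) → Fin n → ℝ) : Prop :=
  SpecTruthful s ∧ ∀ ρ ∈ Dens n, ∀ ρ' ∈ Dens n, ∀ x z,
    IsSpecDecomp ρ' x → IsSpecDecomp ρ z →
    specExp s x ρ' ρ = specExp s z ρ ρ → ρ' = ρ

/-- Elicitability of a property of density matrices by a quantum score. -/
def ElicitableProp {n : ℕ} {R : Type*} (Γ : Mat n → R) : Prop :=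
  ∃ (m : ℕ) (s : R → Fin m → ℝ) (μ : R → Fin m → Mat n),
    (∀ r, IsPOVM (μ r)) ∧
    ∀ ρ ∈ Dens n, ∀ r, (∀ r', expScoreR s μ r' ρ ≤ expScoreR s μ r ρ) ↔ r = Γ ρ

/-- Identifiability of an ℝᵏ-valued property of density matrices. -/
def IdentifiableProp {n k : ℕ} (Γ : Mat n → (Fin k → ℝ)) : Prop :=
  ∃ V : (Fin k → ℝ) → Fin k → Mat n,
    ∀ r ∈ Γ '' (Dens n), (∀ i, (V r i).IsHermitian) ∧
      ∀ ρ ∈ Dens n, (Γ ρ = r ↔ ∀ i, hip (V r i) ρ = 0)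

/-- `Γ` is `k`-elicitable. -/
def KElicitable {n : ℕ} {R : Type*} (k : ℕ) (Γ : Mat n → R) : Prop :=
  ∃ (Γh : Mat n → (Fin k → ℝ)) (ψ : (Fin k → ℝ) → R),
    ElicitableProp Γh ∧ IdentifiableProp Γh ∧ ∀ ρ ∈ Dens n, Γ ρ = ψ (Γh ρ)

end

section AuxProofs

open Matrix BigOperators ComplexOrder Finset

variable {n : ℕ}

/-- Permutations preserve the simplex. -/
private lemma simplex_comp_perm {p : Fin n → ℝ} (hp : p ∈ stdSimplex ℝ (Fin n))
    (σ : Equiv.Perm (Fin n)) : p ∘ σ ∈ stdSimplex ℝ (Fin n) := by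
  refine ⟨fun i => hp.1 _, ?_⟩
  simpa [Function.comp] using (Equiv.sum_comp σ p).trans hp.2

/-- `f (eigs ρ) = f (eigenvalues)` for permutation-invariant `f`. -/
private lemma f_eigs_eq {f : (Fin n → ℝ) → ℝ}
    (hperm : ∀ (π : Equiv.Perm (Fin n)) (p : Fin n → ℝ), f (p ∘ π) = f p)
    {ρ : Mat n} (hρ : ρ.IsHermitian) : f (eigs ρ) = f hρ.eigenvalues := by
  have h1 : eigs ρ = hρ.eigenvalues ∘ (Fin.revPerm.trans (Tuple.sort hρ.eigenvalues)) := by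
    rw [eigs, dif_pos hρ]
    rfl
  rw [h1, hperm]

/-- Birkhoff decomposition, applied to `mulVec`. -/
private lemma ds_mulVec_decomp {M : Matrix (Fin n) (Fin n) ℝ}
    (hM : M ∈ doublyStochastic ℝ (Fin n)) :
    ∃ w : Equiv.Perm (Fin n) → ℝ, (∀ σ, 0 ≤ w σ) ∧ ∑ σ, w σ = 1 ∧
      ∀ v : Fin n → ℝ, M *ᵥ v = ∑ σ, w σ • (v ∘ σ) := by
  obtain ⟨w, hw0, hw1, hwM⟩ := exists_eq_sum_perm_of_mem_doublyStochastic hM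
  refine ⟨w, hw0, hw1, fun v => ?_⟩
  rw [← hwM]
  ext i
  simp only [mulVec, dotProduct, Finset.sum_apply, Matrix.sum_apply, Matrix.smul_apply,
    Equiv.Perm.permMatrix, PEquiv.toMatrix_apply, Equiv.toPEquiv_apply, Option.mem_def,
    Option.some.injEq, Pi.smul_apply, Function.comp_apply, smul_eq_mul]
  simp only [Finset.sum_mul]
  rw [Finset.sum_comm]
  refine Finset.sum_congr rfl fun σ _ => ?_
  simp [ite_mul, mul_ite, mul_assoc]


/-- Image of a simplex-like set point under a doubly stochastic matrix stays in the set. -/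
private lemma ds_mulVec_mem {s : Set (Fin n → ℝ)} (hs : Convex ℝ s)
    {v : Fin n → ℝ} (hv : ∀ σ : Equiv.Perm (Fin n), v ∘ σ ∈ s)
    {M : Matrix (Fin n) (Fin n) ℝ} (hM : M ∈ doublyStochastic ℝ (Fin n)) :
    M *ᵥ v ∈ s := by
  obtain ⟨w, hw0, hw1, hwv⟩ := ds_mulVec_decomp hM
  rw [hwv v]
  exact hs.sum_mem (fun σ _ => hw0 σ) hw1 (fun σ _ => hv σ)

/-- Schur-convexity: a symmetric convex function decreases under doubly stochastic maps. -/
private lemma ds_mulVec_le {f : (Fin n → ℝ) → ℝ} {s : Set (Fin n → ℝ)}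
    (hf : ConvexOn ℝ s f)
    (hperm : ∀ (π : Equiv.Perm (Fin n)) (p : Fin n → ℝ), f (p ∘ π) = f p)
    {v : Fin n → ℝ} (hv : ∀ σ : Equiv.Perm (Fin n), v ∘ σ ∈ s)
    {M : Matrix (Fin n) (Fin n) ℝ} (hM : M ∈ doublyStochastic ℝ (Fin n)) :
    f (M *ᵥ v) ≤ f v := by
  obtain ⟨w, hw0, hw1, hwv⟩ := ds_mulVec_decomp hM
  rw [hwv v]
  calc f (∑ σ, w σ • (v ∘ σ)) ≤ ∑ σ, w σ • f (v ∘ σ) :=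
        hf.map_sum_le (fun σ _ => hw0 σ) hw1 (fun σ _ => hv σ)
    _ = ∑ σ, w σ • f v := by
        refine Finset.sum_congr rfl fun σ _ => by rw [hperm]
    _ = f v := by rw [← Finset.sum_smul, hw1, one_smul]

/-- Equality case: for strictly convex symmetric `f`, equality under a doubly
stochastic map forces the image to be a permutation of the input. -/
private lemma ds_mulVec_eq_perm {f : (Fin n → ℝ) → ℝ} {s : Set (Fin n → ℝ)}
    (hf : StrictConvexOn ℝ s f)
    (hperm : ∀ (π : Equiv.Perm (Fin n)) (p : Fin n → ℝ), f (p ∘ π) = f p)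
    {v : Fin n → ℝ} (hv : ∀ σ : Equiv.Perm (Fin n), v ∘ σ ∈ s)
    {M : Matrix (Fin n) (Fin n) ℝ} (hM : M ∈ doublyStochastic ℝ (Fin n))
    (heq : f (M *ᵥ v) = f v) :
    ∃ σ : Equiv.Perm (Fin n), M *ᵥ v = v ∘ σ := by
  classical
  obtain ⟨w, hw0, hw1, hwv⟩ := ds_mulVec_decomp hM
  set t : Finset (Equiv.Perm (Fin n)) := Finset.univ.filter fun σ => w σ ≠ 0 with ht
  have hsum : ∀ g : Equiv.Perm (Fin n) → ℝ, ∑ σ ∈ t, w σ * g σ = ∑ σ, w σ * g σ := by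
    intro g
    refine Finset.sum_subset (Finset.subset_univ t) fun σ _ hσ => ?_
    have : w σ = 0 := by simpa [ht] using hσ
    simp [this]
  have hsum' : ∀ g : Equiv.Perm (Fin n) → Fin n → ℝ,
      ∑ σ ∈ t, w σ • g σ = ∑ σ, w σ • g σ := by
    intro g
    refine Finset.sum_subset (Finset.subset_univ t) fun σ _ hσ => ?_
    have : w σ = 0 := by simpa [ht] using hσ
    simp [this]
  have hw1t : ∑ σ ∈ t, w σ = 1 := by
    have := hsum fun _ => 1
    simpa [hw1] using this
  have hpos : ∀ σ ∈ t, 0 < w σ := fun σ hσ =>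
    lt_of_le_of_ne (hw0 σ) (Ne.symm (by simpa [ht] using hσ))
  have hvt : M *ᵥ v = ∑ σ ∈ t, w σ • (v ∘ σ) := by rw [hwv v, hsum']
  have hfeq : ∑ σ ∈ t, w σ • f (v ∘ σ) ≤ f (∑ σ ∈ t, w σ • (v ∘ σ)) := by
    have h1 : ∑ σ ∈ t, w σ • f (v ∘ σ) = f v := by
      calc ∑ σ ∈ t, w σ • f (v ∘ σ) = ∑ σ ∈ t, w σ * f v := by
            exact Finset.sum_congr rfl fun σ _ => by rw [hperm]; rfl
        _ = f v := by rw [hsum fun _ => f v]; rw [← Finset.sum_mul, hw1, one_mul]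
    rw [h1, ← hvt, heq]
  have hall := hf.eq_of_le_map_sum hpos hw1t (fun σ _ => hv σ) hfeq
  have htne : t.Nonempty := by
    by_contra h
    rw [Finset.not_nonempty_iff_eq_empty] at h
    rw [h] at hw1t
    simp at hw1t
  obtain ⟨σ₀, hσ₀⟩ := htne
  refine ⟨σ₀, ?_⟩
  rw [hvt]
  calc ∑ σ ∈ t, w σ • (v ∘ σ) = ∑ σ ∈ t, w σ • (v ∘ σ₀) :=
        Finset.sum_congr rfl fun σ hσ => by rw [hall hσ hσ₀]
    _ = v ∘ σ₀ := by rw [← Finset.sum_smul, hw1t, one_smul]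

/-- The sum of squares is strictly convex on `ℝⁿ`. -/
private lemma strictConvexOn_sumSq :
    StrictConvexOn ℝ (Set.univ : Set (Fin n → ℝ)) (fun v => ∑ i, v i ^ 2) := by
  refine ⟨convex_univ, ?_⟩
  intro x _ y _ hxy a b ha hb hab
  have key : ∀ i, (a • x + b • y) i ^ 2
      = a * x i ^ 2 + b * y i ^ 2 - a * b * (x i - y i) ^ 2 := by
    intro i
    simp only [Pi.add_apply, Pi.smul_apply, smul_eq_mul]
    have hb' : b = 1 - a := by linarith
    subst hb'; ring
  show ∑ i, (a • x + b • y) i ^ 2 < a • ∑ i, x i ^ 2 + b • ∑ i, y i ^ 2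
  rw [Finset.sum_congr rfl fun i _ => key i]
  rw [Finset.sum_sub_distrib, Finset.sum_add_distrib, ← Finset.mul_sum, ← Finset.mul_sum,
    ← Finset.mul_sum]
  have hS : 0 < ∑ i, (x i - y i) ^ 2 := by
    have hne : ∃ i, x i ≠ y i := by
      by_contra h
      push_neg at h
      exact hxy (funext h)
    obtain ⟨i, hi⟩ := hne
    refine Finset.sum_pos' (fun j _ => sq_nonneg _) ⟨i, Finset.mem_univ i, ?_⟩
    have : x i - y i ≠ 0 := sub_ne_zero.mpr hi
    positivity
  have : 0 < a * b * ∑ i, (x i - y i) ^ 2 := by positivity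
  simp only [smul_eq_mul]
  linarith

/-- If a doubly stochastic image preserves the sum of squares, it is a permutation. -/
private lemma ds_mulVec_perm_of_sumSq {v : Fin n → ℝ}
    {M : Matrix (Fin n) (Fin n) ℝ} (hM : M ∈ doublyStochastic ℝ (Fin n))
    (hsq : ∑ i, (M *ᵥ v) i ^ 2 = ∑ i, v i ^ 2) :
    ∃ σ : Equiv.Perm (Fin n), M *ᵥ v = v ∘ σ := by
  have hperm : ∀ (π : Equiv.Perm (Fin n)) (p : Fin n → ℝ),
      (∑ i, (p ∘ π) i ^ 2) = ∑ i, p i ^ 2 := fun π p => by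
    simpa [Function.comp] using Equiv.sum_comp π (fun i => p i ^ 2)
  exact ds_mulVec_eq_perm strictConvexOn_sumSq hperm (fun _ => Set.mem_univ _) hM hsq



/-- Conjugating by a unitary and taking the diagonal (real parts) is a doubly
stochastic image of the eigenvalues. -/
private lemma exists_ds_diag_conj {ρ : Mat n} (hρ : ρ.IsHermitian)
    (U : Matrix.unitaryGroup (Fin n) ℂ) :
    ∃ M ∈ doublyStochastic ℝ (Fin n),
      (fun i => ((star (U : Mat n) * ρ * (U : Mat n)) i i).re) = M *ᵥ hρ.eigenvalues := by
  classical
  set V : Mat n := (hρ.eigenvectorUnitary : Mat n) with hVdef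
  set W : Mat n := star (U : Mat n) * V with hWdef
  have hUU : (U : Mat n) * star (U : Mat n) = 1 := Matrix.mem_unitaryGroup_iff.mp U.2
  have hUU' : star (U : Mat n) * (U : Mat n) = 1 := Matrix.mem_unitaryGroup_iff'.mp U.2
  have hVV : V * star V = 1 := Matrix.mem_unitaryGroup_iff.mp hρ.eigenvectorUnitary.2
  have hVV' : star V * V = 1 := Matrix.mem_unitaryGroup_iff'.mp hρ.eigenvectorUnitary.2
  have hstarW : star W = star V * (U : Mat n) := by
    rw [hWdef, StarMul.star_mul, star_star]
  have hWW : W * star W = 1 := by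
    rw [hWdef, hstarW, mul_assoc, ← mul_assoc V, hVV, one_mul, hUU']
  have hWW' : star W * W = 1 := by
    rw [hWdef, hstarW, mul_assoc, ← mul_assoc (U : Mat n), hUU, one_mul, hVV']
  set D : Mat n := Matrix.diagonal (RCLike.ofReal ∘ hρ.eigenvalues) with hDdef
  have hconj : star (U : Mat n) * ρ * (U : Mat n) = W * D * star W := by
    have hspec : ρ = V * D * star V := hρ.spectral_theorem
    rw [hstarW, hWdef, hspec]
    simp only [mul_assoc]
  have hentry : ∀ i, (W * D * star W) i i
      = ((∑ j, Complex.normSq (W i j) * hρ.eigenvalues j : ℝ) : ℂ) := by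
    intro i
    rw [Matrix.mul_apply]
    push_cast
    refine Finset.sum_congr rfl fun j _ => ?_
    rw [Matrix.mul_diagonal, Matrix.star_apply]
    have : W i j * star (W i j) = (Complex.normSq (W i j) : ℂ) := Complex.mul_conj (W i j)
    calc W i j * (RCLike.ofReal ∘ hρ.eigenvalues) j * star (W i j)
        = W i j * star (W i j) * ((hρ.eigenvalues j : ℝ) : ℂ) := by
          show W i j * ((hρ.eigenvalues j : ℝ) : ℂ) * star (W i j) = _
          ring
      _ = (Complex.normSq (W i j) : ℂ) * ((hρ.eigenvalues j : ℝ) : ℂ) := by rw [this]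
  refine ⟨fun i j => Complex.normSq (W i j), ?_, ?_⟩
  · apply mem_doublyStochastic_iff_sum.mpr
    refine ⟨fun i j => Complex.normSq_nonneg _, fun i => ?_, fun j => ?_⟩
    · have h1 : (W * star W) i i = 1 := by rw [hWW]; simp
      rw [Matrix.mul_apply] at h1
      have h2 : ((∑ j, Complex.normSq (W i j) : ℝ) : ℂ) = 1 := by
        push_cast
        rw [← h1]
        refine Finset.sum_congr rfl fun j _ => ?_
        rw [Matrix.star_apply]
        exact (Complex.mul_conj (W i j)).symm
      exact_mod_cast h2
    · have h1 : (star W * W) j j = 1 := by rw [hWW']; simp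
      rw [Matrix.mul_apply] at h1
      have h2 : ((∑ i, Complex.normSq (W i j) : ℝ) : ℂ) = 1 := by
        push_cast
        rw [← h1]
        refine Finset.sum_congr rfl fun i _ => ?_
        rw [Matrix.star_apply]
        rw [mul_comm]
        exact (Complex.mul_conj (W i j)).symm
      exact_mod_cast h2
  · funext i
    rw [hconj, hentry, Complex.ofReal_re]
    rfl

/-- Trace of a Hermitian matrix is the sum of its eigenvalues. -/
private lemma trace_eq_sum_eigen {ρ : Mat n} (hρ : ρ.IsHermitian) :
    ρ.trace = ((∑ i, hρ.eigenvalues i : ℝ) : ℂ) := by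
  set V : Mat n := (hρ.eigenvectorUnitary : Mat n) with hVdef
  have hVV : V * star V = 1 := Matrix.mem_unitaryGroup_iff.mp hρ.eigenvectorUnitary.2
  have hVV' : star V * V = 1 := Matrix.mem_unitaryGroup_iff'.mp hρ.eigenvectorUnitary.2
  have hspec : ρ = V * Matrix.diagonal (RCLike.ofReal ∘ hρ.eigenvalues) * star V :=
    hρ.spectral_theorem
  rw [show ρ.trace = (V * Matrix.diagonal (RCLike.ofReal ∘ hρ.eigenvalues) * star V).trace
    from congrArg Matrix.trace hspec]
  rw [Matrix.trace_mul_cycle, hVV', one_mul, Matrix.trace_diagonal]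
  push_cast
  rfl

/-- Trace of the square of a Hermitian matrix is the sum of squared eigenvalues. -/
private lemma trace_sq_eq_sum_eigen_sq {ρ : Mat n} (hρ : ρ.IsHermitian) :
    ((ρ * ρ).trace).re = ∑ i, hρ.eigenvalues i ^ 2 := by
  set V : Mat n := (hρ.eigenvectorUnitary : Mat n) with hVdef
  have hVV : V * star V = 1 := Matrix.mem_unitaryGroup_iff.mp hρ.eigenvectorUnitary.2
  have hVV' : star V * V = 1 := Matrix.mem_unitaryGroup_iff'.mp hρ.eigenvectorUnitary.2
  set D : Mat n := Matrix.diagonal (RCLike.ofReal ∘ hρ.eigenvalues) with hDdef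
  have hspec : ρ = V * D * star V := hρ.spectral_theorem
  have h1 : ρ * ρ = V * (D * D) * star V := by
    rw [hspec]
    calc V * D * star V * (V * D * star V) = V * (D * ((star V * V) * (D * star V))) := by
          simp only [mul_assoc]
      _ = V * (D * D) * star V := by rw [hVV']; simp only [one_mul, mul_assoc]
  rw [h1, Matrix.trace_mul_cycle, hVV', one_mul, hDdef,
    Matrix.diagonal_mul_diagonal, Matrix.trace_diagonal, Complex.re_sum]
  refine Finset.sum_congr rfl fun i _ => ?_
  show (((hρ.eigenvalues i : ℝ) : ℂ) * ((hρ.eigenvalues i : ℝ) : ℂ)).re = _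
  rw [← Complex.ofReal_mul, Complex.ofReal_re, sq]

/-- A Hermitian matrix whose diagonal has the same sum of squares as the trace
of its square is diagonal. -/
private lemma herm_diag_of_sumSq {A : Mat n} (hA : A.IsHermitian)
    (h : ∑ i, (A i i).re ^ 2 = ((A * A).trace).re) :
    A = Matrix.diagonal fun i => (((A i i).re : ℝ) : ℂ) := by
  classical
  have hsym : ∀ i j, A j i = star (A i j) := fun i j => by
    conv_lhs => rw [← hA]
    rfl
  have hdiagRe : ∀ i, A i i = (((A i i).re : ℝ) : ℂ) := by
    intro i
    have := hsym i i
    have him : (A i i).im = 0 := by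
      have := congrArg Complex.im this
      simp at this
      linarith
    exact Complex.ext rfl (by simp [him])
  have htr : ((A * A).trace).re = ∑ i, ∑ j, Complex.normSq (A i j) := by
    rw [Matrix.trace, Complex.re_sum]
    refine Finset.sum_congr rfl fun i _ => ?_
    rw [Matrix.diag_apply, Matrix.mul_apply, Complex.re_sum]
    refine Finset.sum_congr rfl fun j _ => ?_
    rw [hsym i j]
    rw [show A i j * star (A i j) = (Complex.normSq (A i j) : ℂ) from Complex.mul_conj _]
    simp
  have hdiagsq : ∀ i, (A i i).re ^ 2 = Complex.normSq (A i i) := by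
    intro i
    rw [hdiagRe i]
    simp [Complex.normSq_ofReal, sq]
  have hEq : ∑ i, Complex.normSq (A i i) = ∑ i, ∑ j, Complex.normSq (A i j) := by
    rw [← htr, ← h]
    exact Finset.sum_congr rfl fun i _ => (hdiagsq i).symm
  have hrow : ∀ i, Complex.normSq (A i i) = ∑ j, Complex.normSq (A i j) := by
    have hle : ∀ i ∈ Finset.univ (α := Fin n),
        Complex.normSq (A i i) ≤ ∑ j, Complex.normSq (A i j) := fun i _ =>
      Finset.single_le_sum (fun j _ => Complex.normSq_nonneg _) (Finset.mem_univ i)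
    intro i
    exact (Finset.sum_eq_sum_iff_of_le hle).mp hEq i (Finset.mem_univ i)
  have hzero : ∀ i j, i ≠ j → A i j = 0 := by
    intro i j hij
    have h1 : Complex.normSq (A i i) + ∑ k ∈ Finset.univ.erase i, Complex.normSq (A i k)
        = ∑ k, Complex.normSq (A i k) :=
      Finset.add_sum_erase Finset.univ (fun k => Complex.normSq (A i k)) (Finset.mem_univ i)
    have h2 : ∑ k ∈ Finset.univ.erase i, Complex.normSq (A i k) = 0 := by
      rw [← hrow i] at h1
      linarith
    have h3 := (Finset.sum_eq_zero_iff_of_nonneg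
      (fun k _ => Complex.normSq_nonneg (A i k))).mp h2 j
      (Finset.mem_erase.mpr ⟨Ne.symm hij, Finset.mem_univ j⟩)
    exact Complex.normSq_eq_zero.mp h3
  refine Matrix.ext fun i j => ?_
  by_cases hij : i = j
  · subst hij
    rw [Matrix.diagonal_apply_eq]
    exact hdiagRe i
  · rw [Matrix.diagonal_apply_ne _ hij]
    exact hzero i j hij



private lemma posSemidef_real_smul {ρ : Mat n} (hρ : ρ.PosSemidef) {a : ℝ} (ha : 0 ≤ a) :
    (a • ρ).PosSemidef := by
  have h : a • ρ = (a : ℂ) • ρ := by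
    ext i j
    simp [Complex.real_smul]
  rw [h]
  have haC : (0 : ℂ) ≤ (a : ℂ) := by exact_mod_cast ha
  constructor
  · rw [Matrix.IsHermitian, Matrix.conjTranspose_smul, hρ.1.eq]
    congr 1
    simpa using Complex.conj_ofReal a
  · exact (hρ.smul haC).2

private lemma dens_convex : Convex ℝ (Dens n) := by
  intro ρ hρ σ hσ a b ha hb hab
  refine ⟨(posSemidef_real_smul hρ.1 ha).add (posSemidef_real_smul hσ.1 hb), ?_⟩
  rw [Matrix.trace_add, Matrix.trace_smul, Matrix.trace_smul, hρ.2, hσ.2]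
  show a • (1:ℂ) + b • (1:ℂ) = 1
  rw [Complex.real_smul, Complex.real_smul, mul_one, mul_one]
  exact_mod_cast hab

private lemma isHermitian_diag_real (p : Fin n → ℝ) :
    (Matrix.diagonal fun i => (p i : ℂ)).IsHermitian := by
  rw [Matrix.IsHermitian, Matrix.diagonal_conjTranspose]
  have h : (star fun i => (p i : ℂ)) = fun i => (p i : ℂ) := funext fun i => by
    rw [Pi.star_apply, Complex.star_def]
    exact Complex.conj_ofReal (p i)
  rw [h]

private lemma diag_mem_dens {p : Fin n → ℝ} (hp : p ∈ stdSimplex ℝ (Fin n)) :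
    (Matrix.diagonal fun i => (p i : ℂ)) ∈ Dens n := by
  refine ⟨Matrix.PosSemidef.diagonal fun i => ?_, ?_⟩
  · show (0:ℂ) ≤ (p i : ℂ)
    exact_mod_cast hp.1 i
  · rw [Matrix.trace_diagonal]
    have : ((∑ i, p i : ℝ) : ℂ) = 1 := by rw [hp.2]; norm_num
    rw [← this]
    push_cast
    rfl

/-- The diagonal of a real diagonal matrix is a permutation of its eigenvalues. -/
private lemma exists_perm_diag_eigen (p : Fin n → ℝ) :
    ∃ σ : Equiv.Perm (Fin n), p = (isHermitian_diag_real p).eigenvalues ∘ σ := by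
  classical
  set hD := isHermitian_diag_real p
  obtain ⟨M, hM, hMv⟩ := exists_ds_diag_conj hD (1 : Matrix.unitaryGroup (Fin n) ℂ)
  have hid : (fun i => ((star ((1 : Matrix.unitaryGroup (Fin n) ℂ) : Mat n) *
      Matrix.diagonal (fun i => (p i : ℂ)) * ((1 : Matrix.unitaryGroup (Fin n) ℂ) : Mat n)) i i).re)
      = p := by
    funext i
    simp
  rw [hid] at hMv
  have hsq : ∑ i, (M *ᵥ hD.eigenvalues) i ^ 2 = ∑ i, hD.eigenvalues i ^ 2 := by
    rw [← hMv, ← trace_sq_eq_sum_eigen_sq hD,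
      Matrix.diagonal_mul_diagonal, Matrix.trace_diagonal, Complex.re_sum]
    refine Finset.sum_congr rfl fun i _ => ?_
    rw [← Complex.ofReal_mul, Complex.ofReal_re, pow_two]
  obtain ⟨σ, hσ⟩ := ds_mulVec_perm_of_sumSq hM hsq
  exact ⟨σ, hMv.trans hσ⟩

private lemma f_diag {f : (Fin n → ℝ) → ℝ}
    (hperm : ∀ (π : Equiv.Perm (Fin n)) (p : Fin n → ℝ), f (p ∘ π) = f p)
    (p : Fin n → ℝ) : f (eigs (Matrix.diagonal fun i => (p i : ℂ))) = f p := by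
  obtain ⟨σ, hσ⟩ := exists_perm_diag_eigen p
  rw [f_eigs_eq hperm (isHermitian_diag_real p)]
  conv_rhs => rw [hσ]
  rw [hperm]

private lemma eigen_mem_simplex {ρ : Mat n} (h : ρ ∈ Dens n) :
    h.1.1.eigenvalues ∈ stdSimplex ℝ (Fin n) := by
  refine ⟨fun i => h.1.eigenvalues_nonneg i, ?_⟩
  have h2 := (trace_eq_sum_eigen h.1.1).symm.trans h.2
  exact_mod_cast h2

/-- The diagonal of a unitary conjugate lies in the simplex, and the score bound. -/
private lemma dvec_mem_le {f : (Fin n → ℝ) → ℝ}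
    (hf : ConvexOn ℝ (stdSimplex ℝ (Fin n)) f)
    (hperm : ∀ (π : Equiv.Perm (Fin n)) (p : Fin n → ℝ), f (p ∘ π) = f p)
    {ρ : Mat n} (hρ : ρ ∈ Dens n) (U : Matrix.unitaryGroup (Fin n) ℂ) :
    (fun i => ((star (U : Mat n) * ρ * (U : Mat n)) i i).re) ∈ stdSimplex ℝ (Fin n)
    ∧ f (fun i => ((star (U : Mat n) * ρ * (U : Mat n)) i i).re) ≤ f (eigs ρ) := by
  obtain ⟨M, hM, hMv⟩ := exists_ds_diag_conj hρ.1.1 U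
  have hmem := fun σ => simplex_comp_perm (eigen_mem_simplex hρ) σ
  constructor
  · rw [hMv]
    exact ds_mulVec_mem (convex_stdSimplex ℝ (Fin n)) hmem hM
  · rw [hMv, f_eigs_eq hperm hρ.1.1]
    exact ds_mulVec_le hf hperm hmem hM

/-- Equality in the score bound for strictly convex `f` forces the conjugate
to be diagonal. -/
private lemma dvec_eq_diag {f : (Fin n → ℝ) → ℝ}
    (hf : StrictConvexOn ℝ (stdSimplex ℝ (Fin n)) f)
    (hperm : ∀ (π : Equiv.Perm (Fin n)) (p : Fin n → ℝ), f (p ∘ π) = f p)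
    {ρ : Mat n} (hρ : ρ ∈ Dens n) (U : Matrix.unitaryGroup (Fin n) ℂ)
    (heq : f (fun i => ((star (U : Mat n) * ρ * (U : Mat n)) i i).re) = f (eigs ρ)) :
    star (U : Mat n) * ρ * (U : Mat n)
      = Matrix.diagonal fun i => ((((star (U : Mat n) * ρ * (U : Mat n)) i i).re : ℝ) : ℂ) := by
  classical
  set A : Mat n := star (U : Mat n) * ρ * (U : Mat n) with hAdef
  have hUU : (U : Mat n) * star (U : Mat n) = 1 := Matrix.mem_unitaryGroup_iff.mp U.2
  have hA : A.IsHermitian := by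
    show Aᴴ = A
    rw [← Matrix.star_eq_conjTranspose, hAdef, StarMul.star_mul, StarMul.star_mul, star_star,
      Matrix.star_eq_conjTranspose ρ, hρ.1.1.eq, mul_assoc]
  obtain ⟨M, hM, hMv⟩ := exists_ds_diag_conj hρ.1.1 U
  rw [hMv, f_eigs_eq hperm hρ.1.1] at heq
  have hmem := fun σ => simplex_comp_perm (eigen_mem_simplex hρ) σ
  obtain ⟨σ, hσ⟩ := ds_mulVec_eq_perm hf hperm hmem hM heq
  have hAA : A * A = star (U : Mat n) * (ρ * ρ) * (U : Mat n) := by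
    rw [hAdef]
    calc star (U : Mat n) * ρ * (U : Mat n) * (star (U : Mat n) * ρ * (U : Mat n))
        = star (U : Mat n) * (ρ * (((U : Mat n) * star (U : Mat n)) * (ρ * (U : Mat n)))) := by
          simp only [mul_assoc]
      _ = star (U : Mat n) * (ρ * ρ) * (U : Mat n) := by
          rw [hUU, one_mul]
          simp only [mul_assoc]
  have htrA : ((A * A).trace).re = ∑ i, hρ.1.1.eigenvalues i ^ 2 := by
    rw [hAA, Matrix.trace_mul_cycle, ← mul_assoc, hUU, one_mul]
    exact trace_sq_eq_sum_eigen_sq hρ.1.1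
  have hdiag : (fun i => (A i i).re) = M *ᵥ hρ.1.1.eigenvalues := hMv
  have hsum : ∑ i, (A i i).re ^ 2 = ((A * A).trace).re := by
    rw [htrA]
    have : (fun i => (A i i).re) = hρ.1.1.eigenvalues ∘ σ := by rw [hdiag, hσ]
    calc ∑ i, (A i i).re ^ 2 = ∑ i, (hρ.1.1.eigenvalues ∘ σ) i ^ 2 :=
          Finset.sum_congr rfl fun i _ => by
            rw [show (A i i).re = (hρ.1.1.eigenvalues ∘ σ) i from congrFun this i]
      _ = ∑ i, hρ.1.1.eigenvalues i ^ 2 := by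
          simpa [Function.comp] using Equiv.sum_comp σ fun i => hρ.1.1.eigenvalues i ^ 2
  exact herm_diag_of_sumSq hA hsum



private lemma dvec_linear (U : Matrix.unitaryGroup (Fin n) ℂ) (ρ σ : Mat n) (a b : ℝ) :
    (fun i => ((star (U : Mat n) * (a • ρ + b • σ) * (U : Mat n)) i i).re)
      = a • (fun i => ((star (U : Mat n) * ρ * (U : Mat n)) i i).re)
        + b • (fun i => ((star (U : Mat n) * σ * (U : Mat n)) i i).re) := by
  funext i
  have h : star (U : Mat n) * (a • ρ + b • σ) * (U : Mat n)
      = a • (star (U : Mat n) * ρ * (U : Mat n)) + b • (star (U : Mat n) * σ * (U : Mat n)) := by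
    rw [mul_add, add_mul, Matrix.mul_smul, Matrix.smul_mul, Matrix.mul_smul, Matrix.smul_mul]
  rw [h]
  simp [Matrix.add_apply, Matrix.smul_apply, Complex.add_re, Complex.smul_re]

private lemma dvec_eigen_diag {m : Mat n} (hm : m ∈ Dens n) :
    (fun i => ((star ((hm.1.1.eigenvectorUnitary : Matrix.unitaryGroup (Fin n) ℂ) : Mat n) * m *
        ((hm.1.1.eigenvectorUnitary : Matrix.unitaryGroup (Fin n) ℂ) : Mat n)) i i).re)
      = hm.1.1.eigenvalues := by
  funext i
  rw [show star ((hm.1.1.eigenvectorUnitary : Matrix.unitaryGroup (Fin n) ℂ) : Mat n) * m *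
        ((hm.1.1.eigenvectorUnitary : Matrix.unitaryGroup (Fin n) ℂ) : Mat n)
      = Matrix.diagonal (RCLike.ofReal ∘ hm.1.1.eigenvalues)
    from by simpa [Unitary.conjStarAlgAut_apply] using hm.1.1.conjStarAlgAut_star_eigenvectorUnitary]
  rw [Matrix.diagonal_apply_eq]
  exact Complex.ofReal_re _

private lemma unitary_recover (U : Matrix.unitaryGroup (Fin n) ℂ) (τ : Mat n) :
    (U : Mat n) * (star (U : Mat n) * τ * (U : Mat n)) * star (U : Mat n) = τ := by
  have hUU : (U : Mat n) * star (U : Mat n) = 1 := Matrix.mem_unitaryGroup_iff.mp U.2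
  calc (U : Mat n) * (star (U : Mat n) * τ * (U : Mat n)) * star (U : Mat n)
      = ((U : Mat n) * star (U : Mat n)) * τ * ((U : Mat n) * star (U : Mat n)) := by
        simp only [mul_assoc]
    _ = τ := by rw [hUU, one_mul, mul_one]


end AuxProofs

/-- the spectral lift of a permutation-invariant function is
(strictly) convex on density matrices iff the function is (strictly) convex
on the simplex. -/
theorem spectral_lift_convexity {n : ℕ} (f : (Fin n → ℝ) → ℝ)
    (hperm : ∀ (π : Equiv.Perm (Fin n)) (p : Fin n → ℝ), f (p ∘ π) = f p) :
    (ConvexOn ℝ (Dens n) (fun ρ => f (eigs ρ)) ↔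
      ConvexOn ℝ (stdSimplex ℝ (Fin n)) f) ∧
    (StrictConvexOn ℝ (Dens n) (fun ρ => f (eigs ρ)) ↔
      StrictConvexOn ℝ (stdSimplex ℝ (Fin n)) f) := by
  classical
  constructor
  · constructor
    · -- F convex → f convex
      intro hF
      refine ⟨convex_stdSimplex ℝ (Fin n), fun p hp q hq a b ha hb hab => ?_⟩
      have hcombo : (Matrix.diagonal fun i => ((a • p + b • q) i : ℂ))
          = a • (Matrix.diagonal fun i => (p i : ℂ)) + b • (Matrix.diagonal fun i => (q i : ℂ)) := by
        ext i j
        by_cases h : i = j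
        · subst h
          simp only [Matrix.add_apply, Matrix.smul_apply, Matrix.diagonal_apply_eq, Pi.add_apply,
            Pi.smul_apply, smul_eq_mul, Complex.real_smul]
          push_cast
          ring
        · simp [Matrix.diagonal_apply_ne _ h]
      have h2 := hF.2 (diag_mem_dens hp) (diag_mem_dens hq) ha hb hab
      simp only [] at h2
      rw [← hcombo, f_diag hperm, f_diag hperm, f_diag hperm] at h2
      exact h2
    · -- f convex → F convex
      intro hf
      refine ⟨dens_convex, fun ρ hρ σ hσ a b ha hb hab => ?_⟩
      have hmd : a • ρ + b • σ ∈ Dens n := dens_convex hρ hσ ha hb hab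
      set U : Matrix.unitaryGroup (Fin n) ℂ := hmd.1.1.eigenvectorUnitary with hUdef
      set dρ : Fin n → ℝ := fun i => ((star (U : Mat n) * ρ * (U : Mat n)) i i).re with hdρdef
      set dσ : Fin n → ℝ := fun i => ((star (U : Mat n) * σ * (U : Mat n)) i i).re with hdσdef
      obtain ⟨hdρ_mem, hdρ_le⟩ := dvec_mem_le hf hperm hρ U
      obtain ⟨hdσ_mem, hdσ_le⟩ := dvec_mem_le hf hperm hσ U
      rw [← hdρdef] at hdρ_mem hdρ_le
      rw [← hdσdef] at hdσ_mem hdσ_le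
      have hdm := dvec_eigen_diag hmd
      have hlin := dvec_linear U ρ σ a b
      have h1 : f (eigs (a • ρ + b • σ)) = f (a • dρ + b • dσ) := by
        rw [f_eigs_eq hperm hmd.1.1, ← hdm, hlin]
      show f (eigs (a • ρ + b • σ)) ≤ a • f (eigs ρ) + b • f (eigs σ)
      calc f (eigs (a • ρ + b • σ)) = f (a • dρ + b • dσ) := h1
        _ ≤ a • f dρ + b • f dσ := hf.2 hdρ_mem hdσ_mem ha hb hab
        _ ≤ a • f (eigs ρ) + b • f (eigs σ) := by
            simp only [smul_eq_mul]
            have h3 := mul_le_mul_of_nonneg_left hdρ_le ha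
            have h4 := mul_le_mul_of_nonneg_left hdσ_le hb
            linarith
  · constructor
    · -- F strictly convex → f strictly convex
      intro hF
      refine ⟨convex_stdSimplex ℝ (Fin n), fun p hp q hq hpq a b ha hb hab => ?_⟩
      have hne : (Matrix.diagonal fun i => (p i : ℂ)) ≠ (Matrix.diagonal fun i => (q i : ℂ)) := by
        intro h
        apply hpq
        funext i
        have h5 := congrArg (fun X : Mat n => X i i) h
        simp only [Matrix.diagonal_apply_eq] at h5
        exact_mod_cast h5
      have hcombo : (Matrix.diagonal fun i => ((a • p + b • q) i : ℂ))
          = a • (Matrix.diagonal fun i => (p i : ℂ)) + b • (Matrix.diagonal fun i => (q i : ℂ)) := by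
        ext i j
        by_cases h : i = j
        · subst h
          simp only [Matrix.add_apply, Matrix.smul_apply, Matrix.diagonal_apply_eq, Pi.add_apply,
            Pi.smul_apply, smul_eq_mul, Complex.real_smul]
          push_cast
          ring
        · simp [Matrix.diagonal_apply_ne _ h]
      have h2 := hF.2 (diag_mem_dens hp) (diag_mem_dens hq) hne ha hb hab
      simp only [] at h2
      rw [← hcombo, f_diag hperm, f_diag hperm, f_diag hperm] at h2
      exact h2
    · -- f strictly convex → F strictly convex
      intro hf
      have hfc : ConvexOn ℝ (stdSimplex ℝ (Fin n)) f := hf.convexOn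
      refine ⟨dens_convex, fun ρ hρ σ hσ hne a b ha hb hab => ?_⟩
      have hmd : a • ρ + b • σ ∈ Dens n := dens_convex hρ hσ ha.le hb.le hab
      set U : Matrix.unitaryGroup (Fin n) ℂ := hmd.1.1.eigenvectorUnitary with hUdef
      set dρ : Fin n → ℝ := fun i => ((star (U : Mat n) * ρ * (U : Mat n)) i i).re with hdρdef
      set dσ : Fin n → ℝ := fun i => ((star (U : Mat n) * σ * (U : Mat n)) i i).re with hdσdef
      obtain ⟨hdρ_mem, hdρ_le⟩ := dvec_mem_le hfc hperm hρ U
      obtain ⟨hdσ_mem, hdσ_le⟩ := dvec_mem_le hfc hperm hσ U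
      rw [← hdρdef] at hdρ_mem hdρ_le
      rw [← hdσdef] at hdσ_mem hdσ_le
      have hdm := dvec_eigen_diag hmd
      have hlin := dvec_linear U ρ σ a b
      have h1 : f (eigs (a • ρ + b • σ)) = f (a • dρ + b • dσ) := by
        rw [f_eigs_eq hperm hmd.1.1, ← hdm, hlin]
      show f (eigs (a • ρ + b • σ)) < a • f (eigs ρ) + b • f (eigs σ)
      by_cases hd : dρ = dσ
      · have hsum : a • dρ + b • dσ = dρ := by
          rw [← hd, ← add_smul, hab, one_smul]
        have h1' : f (eigs (a • ρ + b • σ)) = f dρ := by rw [h1, hsum]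
        have h4 : f dσ = f dρ := by rw [hd]
        have hρle : f dρ ≤ f (eigs ρ) := hdρ_le
        have hσle : f dρ ≤ f (eigs σ) := by rw [← h4]; exact hdσ_le
        have hid : a * f dρ + b * f dρ = f dρ := by rw [← add_mul, hab, one_mul]
        have hp1 := mul_le_mul_of_nonneg_left hρle ha.le
        have hp2 := mul_le_mul_of_nonneg_left hσle hb.le
        have hle : f (eigs (a • ρ + b • σ)) ≤ a • f (eigs ρ) + b • f (eigs σ) := by
          rw [h1']
          simp only [smul_eq_mul]
          linarith
        rcases lt_or_eq_of_le hle with h | h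
        · exact h
        · exfalso
          rw [h1'] at h
          simp only [smul_eq_mul] at h
          have e1 : f dρ = f (eigs ρ) := by
            by_contra h'
            have hlt := lt_of_le_of_ne hρle h'
            have := mul_lt_mul_of_pos_left hlt ha
            linarith
          have e2 : f dσ = f (eigs σ) := by
            rw [h4]
            by_contra h'
            have hlt := lt_of_le_of_ne hσle h'
            have := mul_lt_mul_of_pos_left hlt hb
            linarith
          have hAρ := dvec_eq_diag hf hperm hρ U e1
          have hAσ := dvec_eq_diag hf hperm hσ U e2
          apply hne
          have hdiag_eq : (Matrix.diagonal fun i =>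
                ((((star (U : Mat n) * ρ * (U : Mat n)) i i).re : ℝ) : ℂ))
              = (Matrix.diagonal fun i =>
                ((((star (U : Mat n) * σ * (U : Mat n)) i i).re : ℝ) : ℂ)) :=
            congrArg Matrix.diagonal (funext fun i => by exact_mod_cast congrFun hd i)
          have h5 : star (U : Mat n) * ρ * (U : Mat n) = star (U : Mat n) * σ * (U : Mat n) :=
            hAρ.trans (hdiag_eq.trans hAσ.symm)
          calc ρ = (U : Mat n) * (star (U : Mat n) * ρ * (U : Mat n)) * star (U : Mat n) :=
                (unitary_recover U ρ).symm
            _ = (U : Mat n) * (star (U : Mat n) * σ * (U : Mat n)) * star (U : Mat n) := by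
                rw [h5]
            _ = σ := unitary_recover U σ
      · calc f (eigs (a • ρ + b • σ)) = f (a • dρ + b • dσ) := h1
          _ < a • f dρ + b • f dσ := hf.2 hdρ_mem hdσ_mem hd ha hb hab
          _ ≤ a • f (eigs ρ) + b • f (eigs σ) := by
              simp only [smul_eq_mul]
              have h3 := mul_le_mul_of_nonneg_left hdρ_le ha.le
              have h4 := mul_le_mul_of_nonneg_left hdσ_le hb.le
              linarith
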